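/- Let B = (1/Φ) A where A is the reservoir connectivity matrix and Φ ≠ 0. Every eigenvalue λ ≠ 1 of B with eigenvector having nonzero last component satisfies (λ − 1)^N / λ^{N−1} = e^{−Nξ}/Φ; equivalently, λ is a root of λ^N − (e^{−Nξ}/Φ + N) λ^{N−1} + Σ_{j=0}^{N−2} C(N,j) (−1)^{N−j} λ^j = 0. -/

import Mathlib

/-- The connectivity matrix of the discretized time-delay reservoir with parameter
`a = ∂ₓf(x₀)` and `Φ = (1 − e^{−ξ}) a` (index `i` stands for neuron `i+1`). -/
noncomputable def reservoirConnectivity (N : ℕ) (ξ a : ℝ) : Matrix (Fin N) (Fin N) ℝ :=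
  fun i j =>
    let Φ : ℝ := (1 - Real.exp (-ξ)) * a
    if i.1 = N - 1 then
      if j.1 = N - 1 then Φ + Real.exp (-(N : ℝ) * ξ)
      else Φ * Real.exp (-((N : ℝ) - ((j.1 : ℝ) + 1)) * ξ)
    else
      if j.1 ≤ i.1 then Φ * Real.exp (-((i.1 : ℝ) - (j.1 : ℝ)) * ξ)
      else if j.1 = N - 1 then Real.exp (-((i.1 : ℝ) + 1) * ξ)
      else 0

lemma resCon_entry0 (N : ℕ) (hN : 0 < N) (ξ a : ℝ) (j : Fin N) :
    reservoirConnectivity N ξ a ⟨0, hN⟩ j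
      = (if j = ⟨0, hN⟩ then (1 - Real.exp (-ξ)) * a else 0)
        + (if j = ⟨N - 1, Nat.sub_lt hN Nat.one_pos⟩ then Real.exp (-ξ) else 0) := by
  have hjN := j.2
  simp only [reservoirConnectivity, Fin.ext_iff, Fin.val_mk]
  split_ifs
  all_goals try omega
  iterate 3 on_goal 2 => simp_all [Nat.le_zero]
  have h1 : N = 1 := by omega
  rw [h1]
  norm_num

lemma resCon_step (N : ℕ) (ξ a : ℝ) (i : Fin N) (hi : 0 < i.1) (j : Fin N) :
    reservoirConnectivity N ξ a i j
      = Real.exp (-ξ) * reservoirConnectivity N ξ a ⟨i.1 - 1, by omega⟩ j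
        + (if j = i then (1 - Real.exp (-ξ)) * a else 0) := by
  have hjN := j.2
  have hiN := i.2
  have hii : ¬ (i.1 - 1 = N - 1) := by omega
  simp only [reservoirConnectivity, Fin.ext_iff, Fin.val_mk, hii, if_false]
  have hc : ((i.1 - 1 : ℕ) : ℝ) = (i.1 : ℝ) - 1 := by
    rw [Nat.cast_sub hi]; norm_num
  split_ifs
  all_goals try omega
  · have h2 : (N : ℝ) = (i.1 : ℝ) + 1 := by exact_mod_cast (by omega : N = i.1 + 1)
    rw [← Real.exp_add, add_comm]
    congr 2
    rw [hc, h2]; ring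
  · have h2 : (N : ℝ) = (i.1 : ℝ) + 1 := by exact_mod_cast (by omega : N = i.1 + 1)
    rw [add_zero, mul_left_comm, ← Real.exp_add]
    congr 2
    rw [hc, h2]; ring
  · rw [add_zero, mul_left_comm, ← Real.exp_add]
    congr 2
    rw [hc]; ring
  · have hji : (j : ℕ) = (i : ℕ) := by omega
    rw [hji]; simp
  · rw [add_zero, ← Real.exp_add]
    congr 1
    rw [hc]; ring
  · ring

/-- Let `B = (1/Φ) A` where `A` is the reservoir connectivity matrix and `Φ ≠ 0`. Every
eigenvalue `λ ≠ 1` of `B` whose eigenvector has nonzero last component satisfies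
`(λ − 1)^N / λ^{N−1} = e^{−Nξ}/Φ`, i.e. it is a root of
`λ^N − (e^{−Nξ}/Φ + N) λ^{N−1} + Σ_{j=0}^{N−2} C(N,j) (−1)^{N−j} λ^j = 0`. -/
theorem reservoirConnectivity_eigenvalue_equation (N : ℕ) (hN : 0 < N) (ξ a : ℝ)
    (hξ : 0 < ξ) (Φ : ℝ) (hΦdef : Φ = (1 - Real.exp (-ξ)) * a) (hΦ : Φ ≠ 0)
    (lam : ℂ) (v : Fin N → ℂ) (hvN : v ⟨N - 1, by omega⟩ ≠ 0)
    (heig : Matrix.mulVec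
        ((1 / (Φ : ℂ)) • (reservoirConnectivity N ξ a).map (algebraMap ℝ ℂ)) v = lam • v)
    (hlam : lam ≠ 1) :
    (lam - 1) ^ N / lam ^ (N - 1) = ((Real.exp (-(N : ℝ) * ξ) / Φ : ℝ) : ℂ) ∧
      lam ^ N - (((Real.exp (-(N : ℝ) * ξ) / Φ : ℝ) : ℂ) + (N : ℂ)) * lam ^ (N - 1) +
          ∑ j ∈ Finset.range (N - 1),
            (N.choose j : ℂ) * (-1 : ℂ) ^ (N - j) * lam ^ j = 0 := by
  have hΦc : (Φ : ℂ) ≠ 0 := Complex.ofReal_ne_zero.mpr hΦ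
  rw [Matrix.smul_mulVec, one_div, inv_smul_eq_iff₀ hΦc] at heig
  have key : ∀ i : Fin N, ∑ j, ((reservoirConnectivity N ξ a i j : ℝ) : ℂ) * v j
      = (Φ : ℂ) * (lam * v i) := by
    intro i
    have h := congrFun heig i
    simpa [Matrix.mulVec, dotProduct, Algebra.algebraMap_self] using h
  have row0 : (Φ : ℂ) * ((lam - 1) * v ⟨0, hN⟩)
      = (Real.exp (-ξ) : ℂ) * v ⟨N - 1, by omega⟩ := by
    have h := key ⟨0, hN⟩
    simp only [resCon_entry0 N hN ξ a, ← hΦdef, Complex.ofReal_add, apply_ite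
      (fun x : ℝ => (x : ℂ)), Complex.ofReal_zero, add_mul, Finset.sum_add_distrib,
      ite_mul, zero_mul, Finset.sum_ite_eq', Finset.mem_univ, if_true] at h
    linear_combination -h
  have hrec : ∀ (i : Fin N) (hi : 0 < i.1),
      (lam - 1) * v i = (Real.exp (-ξ) : ℂ) * lam * v ⟨i.1 - 1, by omega⟩ := by
    intro i hi
    have h := key i
    have h' := key ⟨i.1 - 1, by omega⟩
    simp only [resCon_step N ξ a i hi, ← hΦdef, Complex.ofReal_add, Complex.ofReal_mul,
      apply_ite (fun x : ℝ => (x : ℂ)), Complex.ofReal_zero, add_mul, mul_assoc,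
      Finset.sum_add_distrib, ite_mul, zero_mul, Finset.sum_ite_eq', Finset.mem_univ,
      if_true, ← Finset.mul_sum] at h
    rw [h'] at h
    have h2 : (Φ : ℂ) * ((lam - 1) * v i)
        = (Φ : ℂ) * ((Real.exp (-ξ) : ℂ) * lam * v ⟨i.1 - 1, by omega⟩) := by
      linear_combination -h
    exact mul_left_cancel₀ hΦc h2
  have hiter : ∀ k (hk : k < N), (lam - 1) ^ k * v ⟨k, hk⟩
      = ((Real.exp (-ξ) : ℂ) * lam) ^ k * v ⟨0, hN⟩ := by
    intro k
    induction k with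
    | zero => intro hk; simp
    | succ k ih =>
      intro hk
      have hk' : k < N := by omega
      have h := hrec ⟨k + 1, hk⟩ (by simp)
      have hidx : (⟨(⟨k + 1, hk⟩ : Fin N).1 - 1, by omega⟩ : Fin N) = ⟨k, hk'⟩ := by
        ext; simp
      rw [hidx] at h
      calc (lam - 1) ^ (k + 1) * v ⟨k + 1, hk⟩
          = (lam - 1) ^ k * ((lam - 1) * v ⟨k + 1, hk⟩) := by ring
        _ = (lam - 1) ^ k * ((Real.exp (-ξ) : ℂ) * lam * v ⟨k, hk'⟩) := by rw [h]
        _ = ((Real.exp (-ξ) : ℂ) * lam) * ((lam - 1) ^ k * v ⟨k, hk'⟩) := by ring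
        _ = _ := by rw [ih hk']; ring
  obtain ⟨n, rfl⟩ : ∃ n, N = n + 1 := ⟨N - 1, by omega⟩
  rw [show (⟨n + 1 - 1, by omega⟩ : Fin (n + 1)) = ⟨n, by omega⟩ from rfl] at row0 hvN
  have hA := hiter n (by omega)
  have master : (Φ : ℂ) * (lam - 1) ^ (n + 1)
      = (Real.exp (-ξ) : ℂ) ^ (n + 1) * lam ^ n := by
    have h1 : (Φ : ℂ) * (lam - 1) ^ (n + 1) * v ⟨n, by omega⟩
        = (Real.exp (-ξ) : ℂ) ^ (n + 1) * lam ^ n * v ⟨n, by omega⟩ := by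
      linear_combination ((Φ : ℂ) * (lam - 1)) * hA
        + ((Real.exp (-ξ) : ℂ) * lam) ^ n * row0
    exact mul_right_cancel₀ hvN h1
  have hlamn : lam ^ n ≠ 0 := by
    intro h0
    rcases Nat.eq_zero_or_pos n with rfl | hn
    · simp at h0
    · have hl0 : lam = 0 := pow_eq_zero_iff (by omega) |>.mp h0
      have hmz : (Φ : ℂ) * ((0 : ℂ) - 1) ^ (n + 1)
          = (Real.exp (-ξ) : ℂ) ^ (n + 1) * (0 : ℂ) ^ n := by rw [← hl0]; exact master
      rw [zero_pow (by omega), mul_zero] at hmz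
      have h2 : ((0 : ℂ) - 1) ^ (n + 1) ≠ 0 := pow_ne_zero _ (by norm_num)
      exact h2 ((mul_eq_zero.mp hmz).resolve_left hΦc)
  have hqc : ((Real.exp (-((n + 1 : ℕ) : ℝ) * ξ) : ℝ) : ℂ)
      = (Real.exp (-ξ) : ℂ) ^ (n + 1) := by
    rw [show (-(((n + 1 : ℕ)) : ℝ) * ξ) = ((n + 1 : ℕ) : ℝ) * (-ξ) by push_cast; ring,
      Real.exp_nat_mul, Complex.ofReal_pow]
  simp only [Nat.add_sub_cancel, Complex.ofReal_div, hqc]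
  have goal1 : (lam - 1) ^ (n + 1) / lam ^ n
      = (Real.exp (-ξ) : ℂ) ^ (n + 1) / (Φ : ℂ) := by
    rw [div_eq_div_iff hlamn hΦc]
    linear_combination master
  refine ⟨goal1, ?_⟩
  have hc2 : (lam - 1) ^ (n + 1)
      = ((Real.exp (-ξ) : ℂ) ^ (n + 1) / (Φ : ℂ)) * lam ^ n := by
    rw [← goal1, div_mul_cancel₀ _ hlamn]
  have hb : (lam - 1) ^ (n + 1)
      = ∑ j ∈ Finset.range (n + 2), lam ^ j * (-1 : ℂ) ^ (n + 1 - j) * ((n + 1).choose j) := by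
    rw [sub_eq_add_neg]
    exact add_pow lam (-1) (n + 1)
  have hb2 : ∑ j ∈ Finset.range (n + 2), lam ^ j * (-1 : ℂ) ^ (n + 1 - j) * ((n + 1).choose j)
      = (∑ j ∈ Finset.range n, lam ^ j * (-1 : ℂ) ^ (n + 1 - j) * ((n + 1).choose j))
        + lam ^ n * (-((n : ℂ) + 1)) + lam ^ (n + 1) := by
    rw [Finset.sum_range_succ, Finset.sum_range_succ]
    congr 1
    · congr 1
      rw [show n + 1 - n = 1 from by omega, Nat.choose_succ_self_right]
      push_cast; ring
    · rw [Nat.sub_self, Nat.choose_self]; push_cast; ring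
  have hsum : ∑ j ∈ Finset.range n, ((n + 1).choose j : ℂ) * (-1 : ℂ) ^ (n + 1 - j) * lam ^ j
      = ∑ j ∈ Finset.range n, lam ^ j * (-1 : ℂ) ^ (n + 1 - j) * ((n + 1).choose j) :=
    Finset.sum_congr rfl (fun j _ => by ring)
  push_cast [-Complex.ofReal_exp]
  linear_combination hsum - hb - hb2 + hc2
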